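/- The optimal growth rate dominates every Perron eigenvalue: if (λ, u) satisfies λ t + u(y) = sup_M {∫₀ᵗ ℓ(y_M(s), M(s)) ds + u(y_M(t))} for all t ≥ 0 and all y in the simplex, with u bounded, then for every m ∈ 𝓜, λ ≥ λ(m), the Perron eigenvalue of m. -/

import Mathlib

open Matrix Set

/-- The standard simplex in `ℝ^n`. -/
def simplexS (n : ℕ) : Set (Fin n → ℝ) := {y | (∀ i, 0 ≤ y i) ∧ ∑ i, y i = 1}

/-- The pay-off `ℓ(y,m) = ⟨1, m y⟩`. -/
def ell {n : ℕ} (y : Fin n → ℝ) (m : Matrix (Fin n) (Fin n) ℝ) : ℝ :=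
  (fun _ => (1 : ℝ)) ⬝ᵥ m.mulVec y

/-- The projected vector field `b(y,m) = m y - ℓ(y,m) y` on the simplex. -/
def bfield {n : ℕ} (y : Fin n → ℝ) (m : Matrix (Fin n) (Fin n) ℝ) : Fin n → ℝ :=
  m.mulVec y - ell y m • y

/-- Set of rewards over admissible controls with values in `𝓜`. -/
def rewardSet {n : ℕ} (𝓜 : Set (Matrix (Fin n) (Fin n) ℝ))
    (u : (Fin n → ℝ) → ℝ) (t : ℝ) (y : Fin n → ℝ) : Set ℝ :=
  { r | ∃ (M : ℝ → Matrix (Fin n) (Fin n) ℝ) (γ : ℝ → Fin n → ℝ),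
      (∀ s ∈ Icc 0 t, M s ∈ 𝓜) ∧ γ 0 = y ∧
      (∀ s ∈ Icc 0 t, HasDerivAt γ (bfield (γ s) (M s)) s) ∧
      r = (∫ s in (0:ℝ)..t, ell (γ s) (M s)) + u (γ t) }

/-- A Metzler matrix: all off-diagonal entries are nonnegative. -/
def IsMetzler {n : ℕ} (m : Matrix (Fin n) (Fin n) ℝ) : Prop :=
  ∀ i j, i ≠ j → 0 ≤ m i j

/-- An irreducible matrix. -/
def IsIrreducibleMat {n : ℕ} (m : Matrix (Fin n) (Fin n) ℝ) : Prop :=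
  ∀ I : Set (Fin n), I.Nonempty → Iᶜ.Nonempty → ∃ i ∈ I, ∃ j ∈ Iᶜ, 0 < m i j


open Filter
open scoped Topology

private lemma min_mul_self_eq' (x : ℝ) : min x 0 * x = (min x 0)^2 := by
  rcases le_or_gt x 0 with h | h
  · rw [min_eq_left h]; ring
  · rw [min_eq_right h.le]; ring

private lemma hasDerivAt_negpart_sq' (x : ℝ) :
    HasDerivAt (fun y : ℝ => (min y 0)^2) (2 * min x 0) x := by
  rcases lt_trichotomy x 0 with h | h | h
  · have hev : (fun y : ℝ => (min y 0)^2) =ᶠ[𝓝 x] fun y => y^2 := by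
      filter_upwards [Iio_mem_nhds h] with y hy
      rw [min_eq_left (le_of_lt hy)]
    have h2 : HasDerivAt (fun y : ℝ => y^2) (2 * x) x := by
      simpa using hasDerivAt_pow 2 x
    rw [min_eq_left h.le]
    exact h2.congr_of_eventuallyEq hev
  · subst h
    rw [min_self, mul_zero]
    rw [hasDerivAt_iff_tendsto_slope]
    have hbound : ∀ y : ℝ, ‖slope (fun y : ℝ => (min y 0)^2) 0 y‖ ≤ |y| := by
      intro y
      by_cases hy : y = 0
      · simp [hy, slope_def_field]
      · rw [slope_def_field]
        simp only [min_self, ne_eq, OfNat.ofNat_ne_zero, not_false_eq_true, zero_pow, sub_zero,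
          Real.norm_eq_abs, abs_div]
        rw [div_le_iff₀ (abs_pos.mpr hy)]
        have h1 : |(min y 0)^2| ≤ |y| * |y| := by
          rcases le_or_gt y 0 with h | h
          · rw [min_eq_left h, abs_pow, sq, ← abs_mul, abs_mul]
          · simp [min_eq_right h.le]
            positivity
        exact h1
    have htend : Tendsto (fun y : ℝ => |y|) (𝓝[≠] (0:ℝ)) (𝓝 0) := by
      have : Tendsto (fun y : ℝ => |y|) (𝓝 0) (𝓝 0) := by
        simpa using (continuous_abs.tendsto (0:ℝ))
      exact this.mono_left nhdsWithin_le_nhds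
    exact squeeze_zero_norm hbound htend
  · have hev : (fun y : ℝ => (min y 0)^2) =ᶠ[𝓝 x] fun _ => 0 := by
      filter_upwards [Ioi_mem_nhds h] with y hy
      rw [min_eq_right (le_of_lt hy)]; ring
    rw [min_eq_right h.le, mul_zero]
    exact (hasDerivAt_const x 0).congr_of_eventuallyEq hev

private lemma gronwall_nonpos' {f f' : ℝ → ℝ} {K b : ℝ}
    (hc : ContinuousOn f (Icc 0 b))
    (hd : ∀ x ∈ Icc 0 b, HasDerivAt f (f' x) x)
    (h0 : f 0 ≤ 0)
    (hb : ∀ x ∈ Ico 0 b, f' x ≤ K * f x) :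
    ∀ x ∈ Icc 0 b, f x ≤ 0 := by
  intro x hx
  have h := le_gronwallBound_of_liminf_deriv_right_le (f := f) (f' := f') (δ := 0) (K := K)
      (ε := 0) (a := 0) (b := b) hc
      (fun z hz r hr => by
        have h2 := ((hd z (Ico_subset_Icc_self hz)).hasDerivWithinAt
          (s := Ici z)).liminf_right_slope_le hr
        refine h2.mono fun w hw => ?_
        rw [slope_def_field] at hw
        rw [div_eq_inv_mul] at hw
        exact hw)
      h0 (fun z hz => by simpa using hb z hz) x hx
  simpa [gronwallBound_ε0_δ0] using h

private lemma gronwall_norm_zero' {f f' : ℝ → ℝ} {K b : ℝ}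
    (hc : ContinuousOn f (Icc 0 b))
    (hd : ∀ x ∈ Icc 0 b, HasDerivAt f (f' x) x)
    (h0 : f 0 = 0)
    (hb : ∀ x ∈ Ico 0 b, ‖f' x‖ ≤ K * ‖f x‖) :
    ∀ x ∈ Icc 0 b, f x = 0 := by
  intro x hx
  have h := norm_le_gronwallBound_of_norm_deriv_right_le (f := f) (f' := f') (δ := 0) (K := K)
      (ε := 0) (a := 0) (b := b) hc
      (fun z hz => (hd z (Ico_subset_Icc_self hz)).hasDerivWithinAt)
      (by simp [h0]) (fun z hz => by simpa using hb z hz) x hx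
  rw [gronwallBound_ε0_δ0] at h
  exact norm_eq_zero.mp (le_antisymm h (norm_nonneg _))

private lemma cross_bound' {ni nj yj c K : ℝ} (hni : ni ≤ 0) (hnj : nj ≤ 0) (hyj : nj ≤ yj)
    (hc0 : 0 ≤ c) (hcK : c ≤ K) : 2 * ni * (c * yj) ≤ K * (ni^2 + nj^2) := by
  have h1 : 2 * ni * (c * yj) ≤ 2 * ni * (c * nj) := by
    have hcle : c * nj ≤ c * yj := mul_le_mul_of_nonneg_left hyj hc0
    nlinarith
  have h2 : 0 ≤ ni * nj := by nlinarith
  nlinarith [sq_nonneg (ni - nj), sq_nonneg (ni + nj)]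

private lemma ell_eq_sum' {n : ℕ} (y : Fin n → ℝ) (m' : Matrix (Fin n) (Fin n) ℝ) :
    ell y m' = ∑ i, ∑ j, m' i j * y j := by
  simp [ell, dotProduct, Matrix.mulVec, one_mul]

private lemma abs_ell_le_of_simplex' {n : ℕ} {y : Fin n → ℝ} {m' : Matrix (Fin n) (Fin n) ℝ}
    (hy : y ∈ simplexS n) {K : ℝ} (hK : (∑ i, ∑ j, |m' i j|) ≤ K) : |ell y m'| ≤ K := by
  have hy1 : ∀ j, y j ≤ 1 := by
    intro j
    rw [← hy.2]
    exact Finset.single_le_sum (f := fun j' => y j') (fun j' _ => hy.1 j') (Finset.mem_univ j)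
  rw [ell_eq_sum']
  calc |∑ i, ∑ j, m' i j * y j| ≤ ∑ i, |∑ j, m' i j * y j| := Finset.abs_sum_le_sum_abs _ _
    _ ≤ ∑ i, ∑ j, |m' i j * y j| := Finset.sum_le_sum fun i _ => Finset.abs_sum_le_sum_abs _ _
    _ ≤ ∑ i, ∑ j, |m' i j| := by
        refine Finset.sum_le_sum fun i _ => Finset.sum_le_sum fun j _ => ?_
        rw [abs_mul, abs_of_nonneg (hy.1 j)]
        calc |m' i j| * y j ≤ |m' i j| * 1 := mul_le_mul_of_nonneg_left (hy1 j) (abs_nonneg _)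
          _ = |m' i j| := mul_one _
    _ ≤ K := hK

private lemma simplex_invariant' {n : ℕ} {𝓜 : Set (Matrix (Fin n) (Fin n) ℝ)}
    (hMetz : ∀ m ∈ 𝓜, IsMetzler m) {K : ℝ}
    (hK : ∀ m' ∈ 𝓜, (∑ i, ∑ j, |m' i j|) ≤ K)
    {b : ℝ} (hb : 0 ≤ b)
    {M : ℝ → Matrix (Fin n) (Fin n) ℝ} {γ : ℝ → Fin n → ℝ}
    (hM : ∀ s ∈ Icc 0 b, M s ∈ 𝓜) (h0 : γ 0 ∈ simplexS n)
    (hγ : ∀ s ∈ Icc 0 b, HasDerivAt γ (bfield (γ s) (M s)) s) :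
    ∀ s ∈ Icc 0 b, γ s ∈ simplexS n := by
  have h0b : (0:ℝ) ∈ Icc 0 b := ⟨le_refl 0, hb⟩
  have hent : ∀ s ∈ Icc 0 b, ∀ i j, |M s i j| ≤ K := by
    intro s hs i j
    calc |M s i j| ≤ ∑ j', |M s i j'| :=
          Finset.single_le_sum (f := fun j' => |M s i j'|)
            (fun _ _ => abs_nonneg _) (Finset.mem_univ j)
      _ ≤ ∑ i', ∑ j', |M s i' j'| :=
          Finset.single_le_sum (f := fun i' => ∑ j', |M s i' j'|)
            (fun _ _ => Finset.sum_nonneg fun _ _ => abs_nonneg _) (Finset.mem_univ i)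
      _ ≤ K := hK _ (hM s hs)
  have hcomp : ∀ (i : Fin n), ∀ s ∈ Icc 0 b,
      HasDerivAt (fun τ => γ τ i) (bfield (γ s) (M s) i) s :=
    fun i s hs => hasDerivAt_pi.1 (hγ s hs) i
  have hconti : ∀ i : Fin n, ContinuousOn (fun τ => γ τ i) (Icc 0 b) :=
    fun i s hs => ((hcomp i s hs).continuousAt).continuousWithinAt
  have hBc : ContinuousOn (fun s => ∑ j, |γ s j|) (Icc 0 b) := by
    apply continuousOn_finset_sum
    intro j _
    exact (hconti j).abs
  obtain ⟨s₀, hs₀, hBmax'⟩ := isCompact_Icc.exists_isMaxOn (nonempty_Icc.mpr hb) hBc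
  have hBmax : ∀ s ∈ Icc 0 b, ∑ j, |γ s j| ≤ ∑ j, |γ s₀ j| := fun s hs => hBmax' hs
  set B := ∑ j, |γ s₀ j| with hBdef
  have hB0 : 0 ≤ B := Finset.sum_nonneg fun _ _ => abs_nonneg _
  have hcoord : ∀ s ∈ Icc 0 b, ∀ j, |γ s j| ≤ B := fun s hs j =>
    le_trans (Finset.single_le_sum (f := fun j' => |γ s j'|)
      (fun _ _ => abs_nonneg _) (Finset.mem_univ j)) (hBmax s hs)
  have hellb : ∀ s ∈ Icc 0 b, |ell (γ s) (M s)| ≤ K * B := by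
    intro s hs
    rw [ell_eq_sum']
    calc |∑ i, ∑ j, M s i j * γ s j| ≤ ∑ i, |∑ j, M s i j * γ s j| :=
          Finset.abs_sum_le_sum_abs _ _
      _ ≤ ∑ i, ∑ j, |M s i j * γ s j| :=
          Finset.sum_le_sum fun i _ => Finset.abs_sum_le_sum_abs _ _
      _ ≤ ∑ i, ∑ j, |M s i j| * B := by
          refine Finset.sum_le_sum fun i _ => Finset.sum_le_sum fun j _ => ?_
          rw [abs_mul]
          exact mul_le_mul_of_nonneg_left (hcoord s hs j) (abs_nonneg _)
      _ = (∑ i, ∑ j, |M s i j|) * B := by rw [Finset.sum_mul]; congr 1; ext i; rw [Finset.sum_mul]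
      _ ≤ K * B := mul_le_mul_of_nonneg_right (hK _ (hM s hs)) hB0
  have hmulvec_sum : ∀ s : ℝ, ∑ i, (M s).mulVec (γ s) i = ell (γ s) (M s) := by
    intro s; simp [ell, dotProduct, one_mul]
  have hsum1 : ∀ s ∈ Icc 0 b, ∑ i, γ s i = 1 := by
    have hgd : ∀ s ∈ Icc 0 b, HasDerivAt (fun τ => (∑ i, γ τ i) - 1)
        (ell (γ s) (M s) * (1 - ∑ i, γ s i)) s := by
      intro s hs
      have h1 : HasDerivAt (fun τ => ∑ i, γ τ i) (∑ i, bfield (γ s) (M s) i) s :=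
        HasDerivAt.fun_sum (fun i _ => hcomp i s hs)
      have h2 : ∑ i, bfield (γ s) (M s) i = ell (γ s) (M s) * (1 - ∑ i, γ s i) := by
        simp only [bfield, Pi.sub_apply, Pi.smul_apply, smul_eq_mul]
        rw [Finset.sum_sub_distrib, ← Finset.mul_sum, hmulvec_sum s]
        ring
      exact h2 ▸ (h1.sub_const 1)
    have hgcont : ContinuousOn (fun τ => (∑ i, γ τ i) - 1) (Icc 0 b) :=
      fun s hs => ((hgd s hs).continuousAt).continuousWithinAt
    have hgz := gronwall_norm_zero' (K := K * B) hgcont hgd (by simp [h0.2])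
      (by
        intro s hs'
        have hs : s ∈ Icc 0 b := Ico_subset_Icc_self hs'
        rw [Real.norm_eq_abs, Real.norm_eq_abs, abs_mul]
        have h3 : |1 - ∑ i, γ s i| = |(∑ i, γ s i) - 1| := abs_sub_comm _ _
        rw [h3]
        exact mul_le_mul_of_nonneg_right (hellb s hs) (abs_nonneg _))
    intro s hs
    have := hgz s hs
    linarith [this]
  have hnn : ∀ s ∈ Icc 0 b, ∀ i, 0 ≤ γ s i := by
    set h : ℝ → ℝ := fun s => ∑ i, (min (γ s i) 0)^2 with hh
    set h' : ℝ → ℝ := fun s => ∑ i, 2 * min (γ s i) 0 * bfield (γ s) (M s) i with hh'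
    have hhd : ∀ s ∈ Icc 0 b, HasDerivAt h (h' s) s := by
      intro s hs
      exact HasDerivAt.fun_sum fun i _ => ((hasDerivAt_negpart_sq' (γ s i)).comp s (hcomp i s hs) :)
    have hcont_h : ContinuousOn h (Icc 0 b) :=
      fun s hs => ((hhd s hs).continuousAt).continuousWithinAt
    have hKey : ∀ s ∈ Ico 0 b, h' s ≤ (2*K*B + 2*K*(n:ℝ)) * h s := by
      intro s hs'
      have hs : s ∈ Icc 0 b := Ico_subset_Icc_self hs'
      have hmetz := hMetz _ (hM s hs)
      have hent' := hent s hs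
      have hell' := hellb s hs
      have habs := abs_le.mp hell'
      have claim : ∀ i : Fin n, 2 * min (γ s i) 0 * bfield (γ s) (M s) i ≤
          (2*K*B + K*(n:ℝ)) * (min (γ s i) 0)^2 + K * (∑ j, (min (γ s j) 0)^2) := by
        intro i
        have hbf : bfield (γ s) (M s) i =
            (∑ j, M s i j * γ s j) - ell (γ s) (M s) * γ s i := by
          simp [bfield, Matrix.mulVec, dotProduct]
        rw [hbf, mul_sub]
        have part2 : -(2 * min (γ s i) 0 * (ell (γ s) (M s) * γ s i)) ≤
            2*K*B * (min (γ s i) 0)^2 := by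
          have e : -(2 * min (γ s i) 0 * (ell (γ s) (M s) * γ s i)) =
              (-2 * ell (γ s) (M s)) * (min (γ s i) 0)^2 := by
            rw [← min_mul_self_eq' (γ s i)]; ring
          rw [e]
          exact mul_le_mul_of_nonneg_right (by linarith [habs.1]) (sq_nonneg _)
        have part1 : 2 * min (γ s i) 0 * (∑ j, M s i j * γ s j) ≤
            K*(n:ℝ) * (min (γ s i) 0)^2 + K * (∑ j, (min (γ s j) 0)^2) := by
          rw [Finset.mul_sum]
          have perj : ∀ j : Fin n, 2 * min (γ s i) 0 * (M s i j * γ s j) ≤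
              K * ((min (γ s i) 0)^2 + (min (γ s j) 0)^2) := by
            intro j
            by_cases hji : j = i
            · subst hji
              have e : 2 * min (γ s j) 0 * (M s j j * γ s j) =
                  2 * M s j j * (min (γ s j) 0)^2 := by
                rw [← min_mul_self_eq' (γ s j)]; ring
              rw [e]
              have hd := abs_le.mp (hent' j j)
              nlinarith [sq_nonneg (min (γ s j) 0)]
            · exact cross_bound' (min_le_right _ _) (min_le_right _ _) (min_le_left _ _)
                (hmetz i j (Ne.symm hji)) (le_of_abs_le (hent' i j))
          calc ∑ j, 2 * min (γ s i) 0 * (M s i j * γ s j)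
              ≤ ∑ j : Fin n, K * ((min (γ s i) 0)^2 + (min (γ s j) 0)^2) :=
                Finset.sum_le_sum fun j _ => perj j
            _ = K*(n:ℝ) * (min (γ s i) 0)^2 + K * (∑ j, (min (γ s j) 0)^2) := by
                simp only [mul_add, Finset.sum_add_distrib, Finset.sum_const,
                  Finset.card_univ, Fintype.card_fin, nsmul_eq_mul, Finset.mul_sum]
                ring
        linarith
      calc h' s ≤ ∑ i : Fin n, ((2*K*B + K*(n:ℝ)) * (min (γ s i) 0)^2 +
            K * (∑ j, (min (γ s j) 0)^2)) := Finset.sum_le_sum fun i _ => claim i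
        _ = (2*K*B + K*(n:ℝ)) * h s + (n:ℝ) * (K * h s) := by
            simp only [Finset.sum_add_distrib, Finset.sum_const, Finset.card_univ,
              Fintype.card_fin, nsmul_eq_mul, ← Finset.mul_sum, hh]
        _ ≤ (2*K*B + 2*K*(n:ℝ)) * h s := by ring_nf; nlinarith [sq_nonneg (1:ℝ)]
    have h0' : h 0 = 0 := by
      apply Finset.sum_eq_zero; intro i _
      rw [min_eq_right (h0.1 i)]; ring
    have hle := gronwall_nonpos' hcont_h hhd (le_of_eq h0') hKey
    intro s hs i
    have hz : h s = 0 := le_antisymm (hle s hs) (Finset.sum_nonneg fun _ _ => sq_nonneg _)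
    have hzi : (min (γ s i) 0)^2 = 0 :=
      (Finset.sum_eq_zero_iff_of_nonneg (fun j _ => sq_nonneg _)).1 hz i (Finset.mem_univ i)
    have hmin : min (γ s i) 0 = 0 := pow_eq_zero_iff (by norm_num) |>.mp hzi
    exact min_eq_right_iff.mp hmin
  exact fun s hs => ⟨hnn s hs, hsum1 s hs⟩

/-- The optimal growth rate dominates every Perron eigenvalue of a matrix in `𝓜`. -/
theorem growth_rate_ge_perron {n : ℕ} (𝓜 : Set (Matrix (Fin n) (Fin n) ℝ))
    (hcomp : IsCompact 𝓜) (hconv : Convex ℝ 𝓜)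
    (hMetz : ∀ m ∈ 𝓜, IsMetzler m) (hirr : ∀ m ∈ 𝓜, IsIrreducibleMat m)
    (lam : ℝ) (u : (Fin n → ℝ) → ℝ)
    (hfp : ∀ t ≥ (0 : ℝ), ∀ y ∈ simplexS n,
      lam * t + u y = sSup (rewardSet 𝓜 u t y))
    (hu : ∃ C : ℝ, ∀ y ∈ simplexS n, |u y| ≤ C)
    (m : Matrix (Fin n) (Fin n) ℝ) (hm : m ∈ 𝓜)
    (lm : ℝ) (zm : Fin n → ℝ) (hzm : zm ∈ simplexS n)
    (heig : m.mulVec zm = lm • zm) :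
    lm ≤ lam := by
  obtain ⟨C, hC⟩ := hu
  -- a uniform bound on the entries of matrices in 𝓜
  have hcontF : ContinuousOn (fun m' : Matrix (Fin n) (Fin n) ℝ => ∑ i, ∑ j, |m' i j|) 𝓜 := by
    refine Continuous.continuousOn ?_
    apply continuous_finset_sum; intro i _; apply continuous_finset_sum; intro j _
    exact (continuous_apply_apply i j).abs
  obtain ⟨m₀, hm₀, hKmax⟩ := hcomp.exists_isMaxOn ⟨m, hm⟩ hcontF
  set K := ∑ i, ∑ j, |m₀ i j| with hKdef
  have hK : ∀ m' ∈ 𝓜, (∑ i, ∑ j, |m' i j|) ≤ K := fun m' h => hKmax h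
  -- the Perron data
  have hell : ell zm m = lm := by
    rw [ell, heig]
    simp [dotProduct, smul_eq_mul, ← Finset.mul_sum, hzm.2]
  have hbf : bfield zm m = 0 := by
    rw [bfield, heig, hell]
    simp
  -- the constant trajectory at zm realises the reward lm * 1 + u zm
  have hmem : lm * 1 + u zm ∈ rewardSet 𝓜 u 1 zm := by
    refine ⟨fun _ => m, fun _ => zm, fun s _ => hm, rfl, fun s _ => ?_, ?_⟩
    · rw [hbf]
      exact hasDerivAt_const s zm
    · rw [intervalIntegral.integral_const]
      simp [hell]
  -- the reward set is bounded above
  have hbdd : BddAbove (rewardSet 𝓜 u 1 zm) := by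
    refine ⟨K * 1 + C, ?_⟩
    rintro r ⟨M, γ, hMm, hγ0, hγd, rfl⟩
    have hinv := simplex_invariant' hMetz hK zero_le_one hMm (hγ0.symm ▸ hzm) hγd
    have h1 : ‖∫ s in (0:ℝ)..1, ell (γ s) (M s)‖ ≤ K * |1 - 0| := by
      apply intervalIntegral.norm_integral_le_of_norm_le_const
      intro s hs
      have hs' : s ∈ Icc (0:ℝ) 1 := by
        rw [uIoc_of_le zero_le_one] at hs
        exact ⟨hs.1.le, hs.2⟩
      rw [Real.norm_eq_abs]
      exact abs_ell_le_of_simplex' (hinv s hs') (hK _ (hMm s hs'))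
    have h2 : u (γ 1) ≤ C := le_of_abs_le (hC _ (hinv 1 ⟨zero_le_one, le_refl 1⟩))
    rw [Real.norm_eq_abs] at h1
    have h3 := (abs_le.mp h1).2
    have h4 : |(1:ℝ) - 0| = 1 := by norm_num
    rw [h4] at h3
    linarith
  have heq := hfp 1 zero_le_one zm hzm
  have hle := le_csSup hbdd hmem
  rw [← heq] at hle
  linarith
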